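/- arXiv:1607.00735 — 4 statements merged into one kernel-verified Lean document; each statement's English description precedes it below -/
import Mathlib

section
/- Let n be a positive integer and let μ = (m_1 ≥ m_2 ≥ ⋯ ≥ m_k) be a partition of 2n in which every odd part occurs with even multiplicity. Then 4·Σ_{j=1}^n n(μ, 2j) = 2n + Σ_j m̃_j² + #{i : m_i is odd}, where μ̃ = (m̃_1, …, m̃_r) is the dual partition of μ. (Equivalently, Σ_{j=1}^n n(μ, 2j) = n/2 + ½·d where d = ½(Σ_j m̃_j² + #{i : m_i odd}) is the dimension of the centralizer in Sp_{2n}(ℂ) of a nilpotent element of Jordan type μ.) -/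
/-- `nIdx μ j` is the index `a` (1-based) such that
`m₁ + ⋯ + m_{a-1} < j ≤ m₁ + ⋯ + m_a`, i.e. the least `a` with
`j ≤ m₁ + ⋯ + m_a`. -/
noncomputable def nIdx (μ : List ℕ) (j : ℕ) : ℕ := sInf {a : ℕ | j ≤ (μ.take a).sum}

lemma take_sum_eq (μ : List ℕ) (a : ℕ) : (μ.take a).sum = ∑ i ∈ Finset.range a, μ.getD i 0 := by
  induction μ generalizing a with
  | nil => simp
  | cons x l ih =>
    cases a with
    | zero => simp
    | succ a => rw [Finset.sum_range_succ']; simp [ih, add_comm]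

lemma countP_eq (μ : List ℕ) (p : ℕ → Bool) :
    μ.countP p = ∑ i ∈ Finset.range μ.length, if p (μ.getD i 0) then 1 else 0 := by
  induction μ with
  | nil => simp
  | cons x l ih =>
    rw [List.length_cons, Finset.sum_range_succ', List.countP_cons, ih]
    simp [add_comm]

lemma nIdx_eq (μ : List ℕ) (j : ℕ) (h2 : j ≤ μ.sum) :
    nIdx μ j = ((Finset.range (μ.length + 1)).filter (fun a => (μ.take a).sum < j)).card := by
  have hmono : ∀ a b : ℕ, a ≤ b → (μ.take a).sum ≤ (μ.take b).sum := by
    intro a b hab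
    rw [take_sum_eq, take_sum_eq]
    exact Finset.sum_le_sum_of_subset (Finset.range_subset_range.mpr hab)
  have hk : μ.length ∈ {a : ℕ | j ≤ (μ.take a).sum} := by
    simp only [Set.mem_setOf_eq, List.take_length]; exact h2
  have hne : {a : ℕ | j ≤ (μ.take a).sum}.Nonempty := ⟨_, hk⟩
  have hNmem := Nat.sInf_mem hne
  have hNk : sInf {a : ℕ | j ≤ (μ.take a).sum} ≤ μ.length := Nat.sInf_le hk
  have : (Finset.range (μ.length + 1)).filter (fun a => (μ.take a).sum < j)
      = Finset.range (sInf {a : ℕ | j ≤ (μ.take a).sum}) := by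
    ext a
    simp only [Finset.mem_filter, Finset.mem_range]
    constructor
    · rintro ⟨-, hlt⟩
      by_contra hcon
      push_neg at hcon
      have := le_trans hNmem (hmono _ _ hcon)
      omega
    · intro ha
      refine ⟨by omega, ?_⟩
      have := Nat.notMem_of_lt_sInf ha
      simp only [Set.mem_setOf_eq] at this
      omega
  rw [this, Finset.card_range]
  rfl

lemma sum_max (f : ℕ → ℕ) (k : ℕ) :
    ∑ i ∈ Finset.range k, ∑ i' ∈ Finset.range k, f (max i i')
      = ∑ i ∈ Finset.range k, (2 * i + 1) * f i := by
  induction k with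
  | zero => simp
  | succ k ih =>
    rw [Finset.sum_range_succ, Finset.sum_range_succ]
    have h1 : ∀ i ∈ Finset.range k, ∑ i' ∈ Finset.range (k + 1), f (max i i')
        = (∑ i' ∈ Finset.range k, f (max i i')) + f k := by
      intro i hi
      rw [Finset.sum_range_succ, max_eq_right (le_of_lt (Finset.mem_range.mp hi))]
    rw [Finset.sum_congr rfl h1, Finset.sum_add_distrib, ih]
    have h2 : ∑ x ∈ Finset.range k, f (max k x) = k * f k := by
      rw [Finset.sum_congr rfl
        (fun i' hi' => by rw [max_eq_left (le_of_lt (Finset.mem_range.mp hi'))]),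
        Finset.sum_const, Finset.card_range, smul_eq_mul]
    rw [h2, max_self, Finset.sum_const, Finset.card_range, smul_eq_mul,
      Finset.sum_range_succ]
    ring

lemma parity_aux : ∀ (N : ℕ) (μ : List ℕ), μ.length ≤ N → μ.Pairwise (· ≥ ·) →
    (∀ x ∈ μ, Odd x → Even (μ.count x)) →
    μ.countP (fun x => decide (Odd x)) = 2 * ∑ a ∈ Finset.range (μ.length + 1), ((μ.take a).sum % 2) := by
  intro N
  induction N with
  | zero =>
    intro μ hlen _ _
    have : μ = [] := List.length_eq_zero_iff.mp (Nat.le_zero.mp hlen)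
    subst this; simp
  | succ N ih =>
    intro μ hlen hsort hodd
    match μ with
    | [] => simp
    | x :: l =>
      rw [List.pairwise_cons] at hsort
      by_cases hx : Odd x
      · -- x odd, show l = x :: l'
        have heven := hodd x List.mem_cons_self hx
        have hcount : (x :: l).count x = l.count x + 1 := by
          simp [List.count_cons_self]
        have hpos : 0 < l.count x := by
          rcases heven with ⟨t, ht⟩; omega
        have hxl : x ∈ l := List.count_pos_iff.mp hpos
        obtain ⟨l', rfl⟩ : ∃ l', l = x :: l' := by
          cases l with
          | nil => simp at hxl
          | cons y l' =>
            have h1 : x ≥ y := hsort.1 y List.mem_cons_self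
            have h2 : y ≥ x := by
              rcases List.mem_cons.mp hxl with h | h
              · omega
              · exact (List.pairwise_cons.mp hsort.2).1 x h
            have : y = x := by omega
            exact ⟨l', by rw [this]⟩
        have hsort'' : l'.Pairwise (· ≥ ·) := (List.pairwise_cons.mp hsort.2).2
        have hIH := ih l' (by simp at hlen ⊢; omega) hsort'' ?_
        · have hx1 : x % 2 = 1 := Nat.odd_iff.mp hx
          have hterm : ∀ a ∈ Finset.range (l'.length + 1),
              (x + (x + (l'.take a).sum)) % 2 = (l'.take a).sum % 2 := by
            intro a _; omega
          have hsum : ∑ a ∈ Finset.range (l'.length + 1 + 1 + 1), (((x :: x :: l').take a).sum % 2)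
              = 1 + ∑ a ∈ Finset.range (l'.length + 1), ((l'.take a).sum % 2) := by
            conv_lhs => rw [Finset.sum_range_succ', Finset.sum_range_succ']
            simp only [List.take_succ_cons, List.take_zero, List.sum_cons, List.sum_nil]
            rw [Finset.sum_congr rfl hterm]
            omega
          simp only [List.length_cons]
          rw [hsum, List.countP_cons, List.countP_cons, hIH]
          simp only [hx, decide_true, if_true]
          omega
        · intro z hz hzodd
          have hcz : (x :: x :: l').count z = l'.count z + (if z = x then 2 else 0) := by
            by_cases h : z = x <;> simp [List.count_cons, h, @eq_comm _ x z]
          by_cases h : z = x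
          · subst h
            have := hodd z (by simp) hzodd
            rw [hcz, if_pos rfl] at this
            rcases this with ⟨t, ht⟩
            exact ⟨t - 1, by omega⟩
          · have := hodd z (by simp [hz]) hzodd
            rw [hcz] at this
            simpa [h] using this
      · -- x even
        have hIH := ih l (by simp at hlen ⊢; omega) hsort.2 ?_
        · have hx0 : x % 2 = 0 := Nat.even_iff.mp (Nat.not_odd_iff_even.mp hx)
          have hterm : ∀ a ∈ Finset.range (l.length + 1),
              (x + (l.take a).sum) % 2 = (l.take a).sum % 2 := by
            intro a _; omega
          have hsum : ∑ a ∈ Finset.range (l.length + 1 + 1), (((x :: l).take a).sum % 2)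
              = ∑ a ∈ Finset.range (l.length + 1), ((l.take a).sum % 2) := by
            conv_lhs => rw [Finset.sum_range_succ']
            simp only [List.take_succ_cons, List.take_zero, List.sum_cons, List.sum_nil]
            rw [Finset.sum_congr rfl hterm]
            omega
          simp only [List.length_cons]
          rw [hsum, List.countP_cons, hIH]
          simp only [hx, decide_false, Bool.false_eq_true, if_false]
          omega
        · intro z hz hzodd
          have hzx : z ≠ x := by
            intro h; subst h; exact hx hzodd
          have := hodd z (by simp [hz]) hzodd
          rwa [List.count_cons_of_ne hzx.symm] at this

/-- For a partition `μ = (m₁ ≥ ⋯ ≥ m_k)` of `2n` in which every odd part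
occurs with even multiplicity (the Jordan type of a nilpotent element of `sp_{2n}`),
`4·Σ_{j=1}^n n(μ,2j) = 2n + Σ_j μ̃_j² + #{i : m_i odd}`, where `μ̃` is the dual partition
(`μ̃_j = 0` for `j > m₁`, so the dual sum may be taken over `1 ≤ j ≤ 2n`). -/
theorem global_nilpotent_stmt1 (n : ℕ) (hn : 0 < n) (μ : List ℕ)
    (hpos : ∀ x ∈ μ, 0 < x) (hsorted : μ.Pairwise (· ≥ ·)) (hsum : μ.sum = 2 * n)
    (hoddmult : ∀ x ∈ μ, Odd x → Even (μ.count x)) :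
    4 * ∑ j ∈ Finset.Icc 1 n, nIdx μ (2 * j) =
      2 * n + (∑ j ∈ Finset.Icc 1 (2 * n), (μ.countP (fun x => decide (j ≤ x))) ^ 2)
        + μ.countP (fun x => decide (Odd x)) := by
  classical
  have hgsum : ∑ i ∈ Finset.range μ.length, μ.getD i 0 = 2 * n := by
    rw [← take_sum_eq, List.take_length, hsum]
  have hgle : ∀ i, i < μ.length → μ.getD i 0 ≤ 2 * n := by
    intro i hi
    rw [List.getD_eq_getElem μ 0 hi, ← hsum]
    exact List.single_le_sum (fun _ _ => Nat.zero_le _) _ (μ.getElem_mem hi)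
  have hanti : ∀ i i', i ≤ i' → i' < μ.length → μ.getD i' 0 ≤ μ.getD i 0 := by
    intro i i' hii hi'
    have hi : i < μ.length := lt_of_le_of_lt hii hi'
    rw [List.getD_eq_getElem μ 0 hi, List.getD_eq_getElem μ 0 hi']
    exact hsorted.rel_get_of_le (show (⟨i, hi⟩ : Fin μ.length) ≤ ⟨i', hi'⟩ from hii)
  have hTle : ∀ a ∈ Finset.range (μ.length + 1), (∑ i ∈ Finset.range a, μ.getD i 0) ≤ 2 * n := by
    intro a ha
    rw [Finset.mem_range] at ha
    rw [← hgsum]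
    exact Finset.sum_le_sum_of_subset (Finset.range_subset_range.mpr (by omega))
  -- Step A
  have hA : ∑ j ∈ Finset.Icc 1 n, nIdx μ (2 * j)
      = ∑ a ∈ Finset.range (μ.length + 1), (n - (∑ i ∈ Finset.range a, μ.getD i 0) / 2) := by
    have h1 : ∀ j ∈ Finset.Icc 1 n, nIdx μ (2 * j)
        = ∑ a ∈ Finset.range (μ.length + 1),
            if (∑ i ∈ Finset.range a, μ.getD i 0) < 2 * j then 1 else 0 := by
      intro j hj
      rw [Finset.mem_Icc] at hj
      rw [nIdx_eq μ (2 * j) (by omega), Finset.card_filter]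
      exact Finset.sum_congr rfl (fun a _ => by rw [take_sum_eq])
    rw [Finset.sum_congr rfl h1, Finset.sum_comm]
    refine Finset.sum_congr rfl fun a ha => ?_
    have hTa := hTle a ha
    rw [← Finset.card_filter]
    have : (Finset.Icc 1 n).filter
        (fun j => (∑ i ∈ Finset.range a, μ.getD i 0) < 2 * j)
        = Finset.Ioc ((∑ i ∈ Finset.range a, μ.getD i 0) / 2) n := by
      ext j
      simp only [Finset.mem_filter, Finset.mem_Icc, Finset.mem_Ioc]
      omega
    rw [this, Nat.card_Ioc]
  -- F1
  have F1 : (∑ j ∈ Finset.Icc 1 n, nIdx μ (2 * j))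
      + (∑ a ∈ Finset.range (μ.length + 1), (∑ i ∈ Finset.range a, μ.getD i 0) / 2)
      = μ.length * n + n := by
    rw [hA, ← Finset.sum_add_distrib]
    have : ∀ a ∈ Finset.range (μ.length + 1),
        (n - (∑ i ∈ Finset.range a, μ.getD i 0) / 2) + (∑ i ∈ Finset.range a, μ.getD i 0) / 2
        = n := by
      intro a ha
      have := hTle a ha
      omega
    rw [Finset.sum_congr rfl this, Finset.sum_const, Finset.card_range, smul_eq_mul,
      add_mul, one_mul]
  -- F2
  have F2 : (∑ a ∈ Finset.range (μ.length + 1), ∑ i ∈ Finset.range a, μ.getD i 0)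
      = 2 * (∑ a ∈ Finset.range (μ.length + 1), (∑ i ∈ Finset.range a, μ.getD i 0) / 2)
        + ∑ a ∈ Finset.range (μ.length + 1), ((∑ i ∈ Finset.range a, μ.getD i 0) % 2) := by
    rw [Finset.mul_sum, ← Finset.sum_add_distrib]
    exact Finset.sum_congr rfl fun a _ => by omega
  -- F3
  have F3 : (∑ a ∈ Finset.range (μ.length + 1), ∑ i ∈ Finset.range a, μ.getD i 0)
      + (∑ i ∈ Finset.range μ.length, i * μ.getD i 0) = 2 * (μ.length * n) := by
    have e1 : ∀ a ∈ Finset.range (μ.length + 1),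
        (∑ i ∈ Finset.range a, μ.getD i 0)
        = ∑ i ∈ Finset.range μ.length, if i < a then μ.getD i 0 else 0 := by
      intro a ha
      rw [Finset.mem_range] at ha
      rw [← Finset.sum_filter]
      apply Finset.sum_congr _ (fun _ _ => rfl)
      ext i
      simp only [Finset.mem_range, Finset.mem_filter]
      omega
    rw [Finset.sum_congr rfl e1, Finset.sum_comm]
    have e2 : ∀ i ∈ Finset.range μ.length,
        (∑ a ∈ Finset.range (μ.length + 1), if i < a then μ.getD i 0 else 0)
        = (μ.length - i) * μ.getD i 0 := by
      intro i hi
      rw [Finset.mem_range] at hi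
      rw [← Finset.sum_filter]
      have : (Finset.range (μ.length + 1)).filter (fun a => i < a) = Finset.Ioc i μ.length := by
        ext a
        simp only [Finset.mem_range, Finset.mem_filter, Finset.mem_Ioc]
        omega
      rw [this, Finset.sum_const, Nat.card_Ioc, smul_eq_mul]
    rw [Finset.sum_congr rfl e2, ← Finset.sum_add_distrib]
    have e3 : ∀ i ∈ Finset.range μ.length,
        (μ.length - i) * μ.getD i 0 + i * μ.getD i 0 = μ.length * μ.getD i 0 := by
      intro i hi
      rw [Finset.mem_range] at hi
      rw [← add_mul]
      congr 1
      omega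
    rw [Finset.sum_congr rfl e3, ← Finset.mul_sum, hgsum]
    ring
  -- F4
  have F4 : (∑ j ∈ Finset.Icc 1 (2 * n), (μ.countP (fun x => decide (j ≤ x))) ^ 2)
      = 2 * (∑ i ∈ Finset.range μ.length, i * μ.getD i 0) + 2 * n := by
    have hcnt : ∀ j : ℕ, μ.countP (fun x => decide (j ≤ x))
        = ∑ i ∈ Finset.range μ.length, if j ≤ μ.getD i 0 then 1 else 0 := by
      intro j
      rw [countP_eq]
      exact Finset.sum_congr rfl fun i _ => by simp
    have hsq : ∀ j ∈ Finset.Icc 1 (2 * n), (μ.countP (fun x => decide (j ≤ x))) ^ 2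
        = ∑ i ∈ Finset.range μ.length, ∑ i' ∈ Finset.range μ.length,
            if j ≤ min (μ.getD i 0) (μ.getD i' 0) then 1 else 0 := by
      intro j _
      rw [hcnt, pow_two, Finset.sum_mul_sum]
      refine Finset.sum_congr rfl fun i _ => Finset.sum_congr rfl fun i' _ => ?_
      simp only [le_min_iff]
      split_ifs <;> omega
    rw [Finset.sum_congr rfl hsq, Finset.sum_comm]
    have hswap : ∀ i ∈ Finset.range μ.length,
        (∑ j ∈ Finset.Icc 1 (2 * n), ∑ i' ∈ Finset.range μ.length,
          if j ≤ min (μ.getD i 0) (μ.getD i' 0) then 1 else 0)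
        = ∑ i' ∈ Finset.range μ.length, min (μ.getD i 0) (μ.getD i' 0) := by
      intro i hi
      rw [Finset.sum_comm]
      refine Finset.sum_congr rfl fun i' hi' => ?_
      rw [Finset.mem_range] at hi hi'
      have hm : min (μ.getD i 0) (μ.getD i' 0) ≤ 2 * n := le_trans (min_le_left _ _) (hgle i hi)
      rw [← Finset.card_filter]
      have : (Finset.Icc 1 (2 * n)).filter (fun j => j ≤ min (μ.getD i 0) (μ.getD i' 0))
          = Finset.Icc 1 (min (μ.getD i 0) (μ.getD i' 0)) := by
        ext j
        simp only [Finset.mem_filter, Finset.mem_Icc]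
        omega
      rw [this, Nat.card_Icc]
      omega
    rw [Finset.sum_congr rfl hswap]
    have hminmax : ∀ i ∈ Finset.range μ.length, ∀ i' ∈ Finset.range μ.length,
        min (μ.getD i 0) (μ.getD i' 0) = μ.getD (max i i') 0 := by
      intro i hi i' hi'
      rw [Finset.mem_range] at hi hi'
      rcases le_total i i' with h | h
      · rw [max_eq_right h, min_eq_right (hanti i i' h hi')]
      · rw [max_eq_left h, min_eq_left (hanti i' i h hi)]
    rw [Finset.sum_congr rfl (fun i hi => Finset.sum_congr rfl (fun i' hi' => hminmax i hi i' hi')),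
      sum_max (fun m => μ.getD m 0) μ.length]
    have : ∀ i ∈ Finset.range μ.length,
        (2 * i + 1) * μ.getD i 0 = 2 * (i * μ.getD i 0) + μ.getD i 0 := by
      intro i _; ring
    rw [Finset.sum_congr rfl this, Finset.sum_add_distrib, hgsum, Finset.mul_sum]
  -- F5
  have F5 : μ.countP (fun x => decide (Odd x))
      = 2 * ∑ a ∈ Finset.range (μ.length + 1), ((∑ i ∈ Finset.range a, μ.getD i 0) % 2) := by
    rw [parity_aux μ.length μ le_rfl hsorted hoddmult]
    congr 1
    exact Finset.sum_congr rfl fun a _ => by rw [take_sum_eq]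
  omega
end

section
/- Let e be a nilpotent m×m complex matrix of Jordan type the partition μ = (m_1 ≥ ⋯ ≥ m_k) of m. Then for every matrix γ ∈ M_m(ℂ[[z]]) whose constant term γ(0) equals e (i.e. γ ∈ e + z·M_m(ℂ[[z]])), one has ν_z(F_j(γ)) ≥ n(μ, j) for every 1 ≤ j ≤ m. -/
namespace GNC

open PowerSeries

lemma sorted_getElem_le {μ : List ℕ} (h : μ.Pairwise (· ≥ ·)) {a b : ℕ} (hab : a ≤ b)
    (hb : b < μ.length) : μ[b] ≤ μ[a] := by
  rcases eq_or_lt_of_le hab with rfl | hab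
  · exact le_refl _
  · exact (List.pairwise_iff_getElem.mp h) a b (lt_of_lt_of_le hab (le_of_lt hb)) hb hab

lemma countP_gt_iff {μ : List ℕ} (hs : μ.Pairwise (· ≥ ·)) {r s : ℕ} (hr : r < μ.length) :
    r < μ.countP (fun x => decide (s ≤ x)) ↔ s ≤ μ[r] := by
  set p : ℕ → Bool := fun x => decide (s ≤ x) with hp
  constructor
  · intro h
    by_contra hc
    push_neg at hc
    have hsplit : μ.countP p = (μ.take r).countP p + (μ.drop r).countP p := by
      conv_lhs => rw [← List.take_append_drop r μ]
      rw [List.countP_append]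
    have h1 : (μ.take r).countP p ≤ r := by
      refine le_trans List.countP_le_length ?_
      rw [List.length_take]; omega
    have h2 : (μ.drop r).countP p = 0 := by
      rw [List.countP_eq_zero]
      intro a ha
      obtain ⟨u, hu, rfl⟩ := List.mem_iff_getElem.mp ha
      have hru : r + u < μ.length := by
        have : (μ.drop r).length = μ.length - r := List.length_drop
        omega
      rw [List.getElem_drop]
      have h3 : μ[r + u] ≤ μ[r] := sorted_getElem_le hs (Nat.le_add_right _ _) hru
      simp only [hp, decide_eq_true_eq]
      omega
    omega
  · intro h
    have hall : (μ.take (r+1)).countP p = (μ.take (r+1)).length := by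
      rw [List.countP_eq_length]
      intro a ha
      obtain ⟨u, hu, rfl⟩ := List.mem_iff_getElem.mp ha
      rw [List.getElem_take]
      have hlen : (μ.take (r+1)).length = min (r+1) μ.length := List.length_take
      have hur : u ≤ r := by omega
      have := sorted_getElem_le hs hur hr
      simp only [hp, decide_eq_true_eq]
      omega
    have hsub := List.Sublist.countP_le (p := p) (List.take_sublist (r+1) μ)
    rw [hall, List.length_take] at hsub
    omega

lemma sum_min_countP_le {μ : List ℕ} (hs : μ.Pairwise (· ≥ ·)) (r : ℕ) :
    ∑ s ∈ Finset.Icc 1 μ.sum, min (μ.countP (fun x => decide (s ≤ x))) r ≤ (μ.take r).sum := by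
  induction r with
  | zero => simp
  | succ r ih =>
    have step : ∀ s : ℕ, min (μ.countP (fun x => decide (s ≤ x))) (r+1)
        = min (μ.countP (fun x => decide (s ≤ x))) r
          + (if r < μ.countP (fun x => decide (s ≤ x)) then 1 else 0) := by
      intro s; split <;> omega
    simp only [step]
    rw [Finset.sum_add_distrib]
    rcases le_or_gt μ.length r with hlen | hlen
    · have hz : ∀ s ∈ Finset.Icc 1 μ.sum,
          (if r < μ.countP (fun x => decide (s ≤ x)) then 1 else 0) = 0 := by
        intro s _
        have := List.countP_le_length (l := μ) (p := fun x => decide (s ≤ x))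
        rw [if_neg (by omega)]
      rw [Finset.sum_congr rfl hz]
      simp only [Finset.sum_const_zero, add_zero]
      have h2 : μ.take (r+1) = μ.take r := by
        rw [List.take_of_length_le hlen, List.take_of_length_le (by omega)]
      rw [h2]
      exact ih
    · have hz : ∀ s ∈ Finset.Icc 1 μ.sum,
          (if r < μ.countP (fun x => decide (s ≤ x)) then 1 else 0)
            = (if s ≤ μ[r] then 1 else 0) := by
        intro s _
        simp only [countP_gt_iff hs hlen]
      rw [Finset.sum_congr rfl hz]
      have hmem : μ[r] ≤ μ.sum := List.single_le_sum (fun x _ => Nat.zero_le x) _ (μ.getElem_mem hlen)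
      have hcount : (∑ s ∈ Finset.Icc 1 μ.sum, if s ≤ μ[r] then 1 else 0) = μ[r] := by
        rw [← Finset.sum_filter]
        have hfil : (Finset.Icc 1 μ.sum).filter (fun s => s ≤ μ[r]) = Finset.Icc 1 μ[r] := by
          ext x
          simp only [Finset.mem_filter, Finset.mem_Icc]
          omega
        rw [hfil, ← Finset.card_eq_sum_ones]
        simp [Nat.card_Icc]
      rw [hcount, List.sum_take_succ _ _ hlen]
      omega

lemma perm_filter_card_le {m : ℕ} (σ : Equiv.Perm (Fin m)) (S : Finset (Fin m))
    (hS : ∀ i, σ i ≠ i → i ∈ S) (lvl : Fin m → ℕ) (s : ℕ) :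
    (S.filter (fun p => lvl p = s)).card ≤ (S.filter (fun i => lvl i ≤ lvl (σ i))).card := by
  classical
  have hstep : ∀ (t : ℕ) (i : Fin m), (σ ^ (t+1)) i = σ ((σ ^ t) i) := by
    intro t i
    rw [pow_succ' σ t]
    rfl
  have hmemS : ∀ i ∈ S, ∀ t, (σ ^ t) i ∈ S := by
    intro i hi t
    induction t with
    | zero => simpa using hi
    | succ t ih =>
      rw [hstep]
      by_cases h : σ ((σ ^ t) i) = (σ ^ t) i
      · rw [h]; exact ih
      · exact hS _ (fun hc => h (σ.injective hc))
  have hex : ∀ i : Fin m, ∃ t, lvl ((σ ^ t) i) ≤ lvl ((σ ^ (t+1)) i) := by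
    intro i
    by_contra hc
    push_neg at hc
    have key : ∀ t, lvl ((σ ^ t) i) + t ≤ lvl ((σ ^ 0) i) := by
      intro t
      induction t with
      | zero => omega
      | succ t ih => have := hc t; omega
    have := key (lvl ((σ ^ 0) i) + 1)
    omega
  set T : Fin m → ℕ := fun i => Nat.find (hex i) with hT
  set φ : Fin m → Fin m := fun i => (σ ^ (T i)) i with hφ
  have hmindec : ∀ (i : Fin m) (u : ℕ), u ≤ T i → lvl ((σ ^ u) i) + u ≤ lvl i := by
    intro i u hu
    induction u with
    | zero => simp
    | succ u ih =>
      have hu' : u < T i := by omega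
      have := Nat.find_min (hex i) hu'
      push_neg at this
      have h2 := ih (by omega)
      omega
  have haux : ∀ i i', lvl i = s → lvl i' = s → T i ≤ T i' → φ i = φ i' → i = i' := by
    intro i i' hli hli' hTle heq
    have hiu : i = (σ ^ (T i' - T i)) i' := by
      have h2 : (σ ^ (T i')) i' = (σ ^ (T i)) ((σ ^ (T i' - T i)) i') := by
        rw [← Equiv.Perm.mul_apply, ← pow_add]
        congr 2
        omega
      have h3 : (σ ^ (T i)) i = (σ ^ (T i)) ((σ ^ (T i' - T i)) i') := by
        rw [← h2]; exact heq
      exact (σ ^ (T i)).injective h3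
    have h4 := hmindec i' (T i' - T i) (by omega)
    rw [← hiu] at h4
    have hTT : T i' - T i = 0 := by omega
    rw [hTT] at hiu
    simpa using hiu
  apply Finset.card_le_card_of_injOn φ
  · intro i hi
    rw [Finset.mem_coe, Finset.mem_filter] at hi ⊢
    refine ⟨hmemS i hi.1 _, ?_⟩
    have hspec := Nat.find_spec (hex i)
    rw [hstep] at hspec
    exact hspec
  · intro i hi i' hi' heq
    rw [Finset.coe_filter, Set.mem_setOf_eq] at hi hi'
    rcases le_total (T i) (T i') with h | h
    · exact haux i i' hi.2 hi'.2 h heq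
    · exact (haux i' i hi'.2 hi.2 h heq.symm).symm



lemma finSumFin_symm_left {a b : ℕ} (x : Fin (a + b)) (h : (x : ℕ) < a) :
    finSumFinEquiv.symm x = Sum.inl ⟨x.1, h⟩ := by
  rw [Equiv.symm_apply_eq, finSumFinEquiv_apply_left]
  ext
  rfl

lemma flag_basis {V : Type*} [AddCommGroup V] [Module ℂ V] [FiniteDimensional ℂ V]
    (K : ℕ → Submodule ℂ V) (hmono : Monotone K) (hbot : K 0 = ⊥) (t : ℕ) :
    ∃ v : Fin (Module.finrank ℂ (K t)) → V, LinearIndependent ℂ v ∧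
      ∀ s, s ≤ t → Submodule.span ℂ (v '' {p | (p : ℕ) < Module.finrank ℂ (K s)}) = K s := by
  induction t with
  | zero =>
    have h0 : Module.finrank ℂ (K 0) = 0 := by rw [hbot]; exact finrank_bot ℂ V
    haveI : IsEmpty (Fin (Module.finrank ℂ (K 0))) := by rw [h0]; exact Fin.isEmpty
    refine ⟨fun _ => 0, linearIndependent_empty_type, ?_⟩
    intro s hs
    interval_cases s
    have : {p : Fin (Module.finrank ℂ (K 0)) | (p : ℕ) < Module.finrank ℂ (K 0)} = ∅ :=
      Set.eq_empty_of_isEmpty _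
    rw [this, Set.image_empty, Submodule.span_empty, hbot]
  | succ t ih =>
    obtain ⟨v, hv, hspan⟩ := ih
    have hKle : K t ≤ K (t+1) := hmono (Nat.le_succ t)
    obtain ⟨C, hC⟩ := Submodule.exists_isCompl ((K t).comap (K (t+1)).subtype)
    have hUfin : Module.finrank ℂ ((K t).comap (K (t+1)).subtype) = Module.finrank ℂ (K t) :=
      LinearEquiv.finrank_eq (Submodule.comapSubtypeEquivOfLe hKle)
    have hrank : Module.finrank ℂ (K t) + Module.finrank ℂ C
        = Module.finrank ℂ (K (t+1)) := by
      rw [← hUfin]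
      exact Submodule.finrank_add_eq_of_isCompl hC
    let c := Module.finBasis ℂ C
    let g : C →ₗ[ℂ] V := (K (t+1)).subtype.comp C.subtype
    have hginj : Function.Injective g := by
      have : ⇑g = (Subtype.val : K (t+1) → V) ∘ (Subtype.val : C → K (t+1)) := rfl
      rw [this]
      exact (Submodule.injective_subtype _).comp (Submodule.injective_subtype C)
    have hspanv : Submodule.span ℂ (Set.range v) = K t := by
      have h1 := hspan t le_rfl
      have h2 : {p : Fin (Module.finrank ℂ (K t)) | (p : ℕ) < Module.finrank ℂ (K t)}
          = Set.univ := by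
        ext p; simpa using p.isLt
      rwa [h2, Set.image_univ] at h1
    have hspanc : Submodule.span ℂ (Set.range (fun q => g (c q)))
        = C.map (K (t+1)).subtype := by
      have h1 : Set.range (fun q => g (c q)) = g '' (Set.range c) := by
        rw [← Set.range_comp]; rfl
      rw [h1, ← Submodule.map_span, Module.Basis.span_eq]
      rw [Submodule.map_top, LinearMap.range_comp, Submodule.range_subtype]
    have hdisj : Disjoint (K t) (C.map (K (t+1)).subtype) := by
      rw [Submodule.disjoint_def]
      intro x hx1 hx2
      obtain ⟨y, hyC, rfl⟩ := hx2
      have hyU : y ∈ (K t).comap (K (t+1)).subtype := by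
        rw [Submodule.mem_comap]
        exact hx1
      have : y = 0 := Submodule.disjoint_def.mp hC.disjoint y hyU hyC
      rw [this]; rfl
    have hu : LinearIndependent ℂ (Sum.elim v (fun q => g (c q))) := by
      apply LinearIndependent.sum_type hv
      · exact (c.linearIndependent.map' g (LinearMap.ker_eq_bot.mpr hginj))
      · rw [hspanv, hspanc]
        exact hdisj
    have hcastinj : Function.Injective
        (fun q : Fin (Module.finrank ℂ (K (t+1))) =>
          finSumFinEquiv.symm (Fin.cast hrank.symm q)) := by
      intro a b hab
      have h2 := finSumFinEquiv.symm.injective hab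
      exact Fin.cast_injective _ h2
    refine ⟨fun q => Sum.elim v (fun q => g (c q)) (finSumFinEquiv.symm (Fin.cast hrank.symm q)),
      hu.comp _ hcastinj, ?_⟩
    have hv'eq : ∀ (q : Fin (Module.finrank ℂ (K (t+1)))) (h : (q : ℕ) < Module.finrank ℂ (K t)),
        Sum.elim v (fun q => g (c q)) (finSumFinEquiv.symm (Fin.cast hrank.symm q)) = v ⟨q.1, h⟩ := by
      intro q h
      rw [finSumFin_symm_left (Fin.cast hrank.symm q) h]
      rfl
    intro s hs
    rcases Nat.lt_or_ge s (t+1) with hst | hst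
    · have hst' : s ≤ t := by omega
      have hDle : Module.finrank ℂ (K s) ≤ Module.finrank ℂ (K t) :=
        Submodule.finrank_mono (hmono hst')
      have himg : (fun q => Sum.elim v (fun q => g (c q)) (finSumFinEquiv.symm (Fin.cast hrank.symm q)))
            '' {p | (p : ℕ) < Module.finrank ℂ (K s)}
          = v '' {p | (p : ℕ) < Module.finrank ℂ (K s)} := by
        ext x
        constructor
        · rintro ⟨q, hq, rfl⟩
          have hqlt : (q : ℕ) < Module.finrank ℂ (K t) := lt_of_lt_of_le hq hDle
          exact ⟨⟨q.1, hqlt⟩, hq, (hv'eq q hqlt).symm⟩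
        · rintro ⟨p, hp, rfl⟩
          have hplt : (p : ℕ) < Module.finrank ℂ (K (t+1)) := by
            have := p.isLt
            omega
          refine ⟨⟨p.1, hplt⟩, hp, ?_⟩
          exact hv'eq ⟨p.1, hplt⟩ p.isLt
      rw [himg]
      exact hspan s hst'
    · have hseq : s = t + 1 := by omega
      subst hseq
      have h2 : {p : Fin (Module.finrank ℂ (K (t+1))) | (p : ℕ) < Module.finrank ℂ (K (t+1))}
          = Set.univ := by
        ext p; simpa using p.isLt
      rw [h2, Set.image_univ]
      have hsurj : Function.Surjective
          (fun q : Fin (Module.finrank ℂ (K (t+1))) => finSumFinEquiv.symm (Fin.cast hrank.symm q)) := by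
        intro y
        refine ⟨Fin.cast hrank (finSumFinEquiv y), ?_⟩
        simp
      have hrange : Set.range (fun q => Sum.elim v (fun q => g (c q))
            (finSumFinEquiv.symm (Fin.cast hrank.symm q)))
          = Set.range (Sum.elim v (fun q => g (c q))) :=
        hsurj.range_comp _
      rw [hrange, Set.Sum.elim_range, Submodule.span_union, hspanv, hspanc]
      have h3 : Submodule.map (K (t+1)).subtype ((K t).comap (K (t+1)).subtype) = K t := by
        rw [Submodule.map_comap_subtype]
        exact inf_eq_right.mpr hKle
      rw [← h3, ← Submodule.map_sup, hC.sup_eq_top, Submodule.map_top,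
        Submodule.range_subtype]




lemma charpoly_conj {R : Type*} [CommRing R] {m : ℕ} (P Pinv γ : Matrix (Fin m) (Fin m) R)
    (h1 : P * Pinv = 1) (h2 : Pinv * P = 1) :
    (Pinv * γ * P).charpoly = γ.charpoly := by
  unfold Matrix.charpoly
  have hmap1 : (Pinv.map Polynomial.C) * (P.map Polynomial.C) = 1 := by
    rw [← Matrix.map_mul, h2, Matrix.map_one Polynomial.C Polynomial.C_0 Polynomial.C_1]
  have hmap2 : (P.map Polynomial.C) * (Pinv.map Polynomial.C) = 1 := by
    rw [← Matrix.map_mul, h1, Matrix.map_one Polynomial.C Polynomial.C_0 Polynomial.C_1]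
  have hcm : Matrix.charmatrix (Pinv * γ * P)
      = (Pinv.map Polynomial.C) * Matrix.charmatrix γ * (P.map Polynomial.C) := by
    unfold Matrix.charmatrix
    rw [Matrix.mul_sub, Matrix.sub_mul]
    congr 1
    · have : (Matrix.scalar (Fin m)) (Polynomial.X : Polynomial R)
          = (Polynomial.X : Polynomial R) • (1 : Matrix (Fin m) (Fin m) (Polynomial R)) := by
        rw [Matrix.scalar_apply, Matrix.smul_one_eq_diagonal]
      rw [this, Matrix.mul_smul, mul_one, Matrix.smul_mul, hmap1]
    · simp only [RingHom.mapMatrix_apply]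
      rw [← Matrix.map_mul, ← Matrix.map_mul]
  rw [hcm, Matrix.det_mul, Matrix.det_mul, mul_comm ((Pinv.map Polynomial.C).det) _, mul_assoc,
    ← Matrix.det_mul, hmap1, Matrix.det_one, mul_one]

lemma le_order_prod {ι : Type*} (s : Finset ι) (g : ι → PowerSeries ℂ) (w : ι → ℕ)
    (h : ∀ i ∈ s, (w i : ℕ∞) ≤ (g i).order) :
    ((∑ i ∈ s, w i : ℕ) : ℕ∞) ≤ (∏ i ∈ s, g i).order := by
  classical
  induction s using Finset.cons_induction with
  | empty => simp [PowerSeries.order_one]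
  | cons a s ha ih =>
    rw [Finset.prod_cons, Finset.sum_cons, Nat.cast_add]
    refine le_trans ?_ (PowerSeries.le_order_mul _ _)
    exact add_le_add (h a (Finset.mem_cons_self a s))
      (ih (fun i hi => h i (Finset.mem_cons_of_mem hi)))

lemma core_estimate {m : ℕ} (δ : Matrix (Fin m) (Fin m) (PowerSeries ℂ))
    (lvl : Fin m → ℕ) (n j : ℕ) (hjm : j ≤ m)
    (hzero : ∀ i l : Fin m, ¬ (lvl i < lvl l) → PowerSeries.constantCoeff (R := ℂ) (δ i l) = 0)
    (hcomb : ∀ (S : Finset (Fin m)) (σ : Equiv.Perm (Fin m)), S.card = j →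
      (∀ i, σ i ≠ i → i ∈ S) → n ≤ (S.filter (fun i => lvl i ≤ lvl (σ i))).card) :
    (n : ℕ∞) ≤ ((δ.charpoly.coeff (m - j)).order) := by
  classical
  apply PowerSeries.nat_le_order
  intro d hd
  rw [Matrix.charpoly, Matrix.det_apply, Polynomial.finset_sum_coeff, map_sum]
  apply Finset.sum_eq_zero
  intro σ _
  -- reduce the sign
  suffices hkey : (PowerSeries.coeff (R := ℂ) d)
      ((∏ i : Fin m, Matrix.charmatrix δ (σ i) i).coeff (m - j)) = 0 by
    rcases Int.units_eq_one_or (Equiv.Perm.sign σ) with hs | hs <;>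
      rw [hs] <;>
      simp only [one_smul, Units.smul_def, Units.val_neg, Units.val_one, neg_smul, one_smul,
        Polynomial.coeff_neg, map_neg, hkey, neg_zero]
  -- go to power series coefficients
  have hco : ((∏ i : Fin m, Matrix.charmatrix δ (σ i) i : Polynomial (PowerSeries ℂ)) :
        PowerSeries (PowerSeries ℂ))
      = ∏ i : Fin m, ((Matrix.charmatrix δ (σ i) i : Polynomial (PowerSeries ℂ)) :
        PowerSeries (PowerSeries ℂ)) := by
    simp_rw [← Polynomial.coeToPowerSeries.ringHom_apply]
    exact map_prod _ _ _
  rw [← Polynomial.coeff_coe, hco, PowerSeries.coeff_prod]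
  rw [map_sum]
  apply Finset.sum_eq_zero
  intro x hx
  apply PowerSeries.coeff_of_lt_order
  have hdn : (d : ℕ∞) < (n : ℕ∞) := by exact_mod_cast hd
  refine lt_of_lt_of_le hdn ?_
  by_cases hgood : ∀ i : Fin m, x i ≤ 1 ∧ (x i = 1 → σ i = i)
  · -- the structured case
    set S : Finset (Fin m) := Finset.univ.filter (fun i => x i = 0) with hS
    have hxsum : ∑ i : Fin m, x i = m - j := by
      have := (Finset.mem_finsuppAntidiag.mp hx).1
      exact this
    have hScard : S.card = j := by
      have hsplit : S.card + (Finset.univ.filter (fun i : Fin m => ¬ x i = 0)).card = m := by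
        simpa using Finset.card_filter_add_card_filter_not
          (s := Finset.univ) (p := fun i : Fin m => x i = 0)
      have hone : ∑ i : Fin m, x i
          = (Finset.univ.filter (fun i : Fin m => ¬ x i = 0)).card := by
        rw [← Finset.sum_filter_ne_zero]
        rw [Finset.card_eq_sum_ones]
        apply Finset.sum_congr rfl
        intro i hi
        rw [Finset.mem_filter] at hi
        have := (hgood i).1
        omega
      have hcardu : (Finset.univ : Finset (Fin m)).card = m := by simp
      omega
    have hmoved : ∀ i, σ i ≠ i → i ∈ S := by
      intro i hne
      rw [hS, Finset.mem_filter]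
      refine ⟨Finset.mem_univ _, ?_⟩
      rcases hgood i with ⟨h1, h2⟩
      by_contra hxi
      have : x i = 1 := by omega
      exact hne (h2 this)
    have hNG := hcomb S σ hScard hmoved
    set NG := S.filter (fun i => lvl i ≤ lvl (σ i)) with hNGdef
    refine le_trans ?_ (le_order_prod Finset.univ _ (fun i => if i ∈ NG then 1 else 0) ?_)
    · have hsum : ∑ i : Fin m, (if i ∈ NG then 1 else 0) = NG.card := by
        rw [Finset.sum_ite_mem, Finset.univ_inter, Finset.card_eq_sum_ones]
      rw [hsum]
      exact_mod_cast hNG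
    · intro i _
      by_cases hiNG : i ∈ NG
      · simp only [if_pos hiNG]
        have hiS : i ∈ S := Finset.mem_filter.mp hiNG |>.1
        have hxi : x i = 0 := (Finset.mem_filter.mp hiS).2
        have hlvl : lvl i ≤ lvl (σ i) := by
          have := (Finset.mem_filter.mp hiNG).2
          exact this
        have hentry : (PowerSeries.coeff (R := PowerSeries ℂ) (x i))
            ((Matrix.charmatrix δ (σ i) i : Polynomial (PowerSeries ℂ)) :
              PowerSeries (PowerSeries ℂ)) = - δ (σ i) i := by
          rw [Polynomial.coeff_coe, hxi]
          by_cases hσi : σ i = i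
          · rw [hσi, Matrix.charmatrix_apply_eq]
            simp
          · rw [Matrix.charmatrix_apply_ne _ _ _ hσi]
            simp
        rw [hentry]
        apply PowerSeries.nat_le_order
        intro k hk
        have hk0 : k = 0 := by omega
        subst hk0
        rw [map_neg, PowerSeries.coeff_zero_eq_constantCoeff]
        rw [hzero (σ i) i (by omega)]
        exact neg_zero
      · simp only [if_neg hiNG, Nat.cast_zero]
        exact zero_le
  · -- some factor is zero
    push_neg at hgood
    obtain ⟨i, hbad⟩ := hgood
    have hf0 : (PowerSeries.coeff (R := PowerSeries ℂ) (x i))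
        ((Matrix.charmatrix δ (σ i) i : Polynomial (PowerSeries ℂ)) :
          PowerSeries (PowerSeries ℂ)) = 0 := by
      rw [Polynomial.coeff_coe]
      have hbad' : (2 ≤ x i) ∨ (x i = 1 ∧ ¬ σ i = i) := by
        by_cases hle : x i ≤ 1
        · exact Or.inr ⟨(hbad hle).1, (hbad hle).2⟩
        · exact Or.inl (by omega)
      rcases hbad' with h1 | ⟨h1, h2⟩
      · -- 1 < x i
        by_cases hσi : σ i = i
        · rw [hσi, Matrix.charmatrix_apply_eq, Polynomial.coeff_sub, Polynomial.coeff_X,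
            Polynomial.coeff_C, if_neg (by omega), if_neg (by omega), sub_zero]
        · rw [Matrix.charmatrix_apply_ne _ _ _ hσi, Polynomial.coeff_neg, Polynomial.coeff_C,
            if_neg (by omega), neg_zero]
      · rw [Matrix.charmatrix_apply_ne _ _ _ h2, Polynomial.coeff_neg, Polynomial.coeff_C,
          if_neg (by omega), neg_zero]
    rw [Finset.prod_eq_zero (Finset.mem_univ i) hf0, PowerSeries.order_zero]
    exact le_top


lemma map_sub_sum_eq (μ : List ℕ) (s : ℕ) (hs : 1 ≤ s) :
    (μ.map (fun x => x - (s-1))).sum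
      = (μ.map (fun x => x - s)).sum + μ.countP (fun x => decide (s ≤ x)) := by
  induction μ with
  | nil => simp
  | cons x l ih =>
    rw [List.map_cons, List.map_cons, List.sum_cons, List.sum_cons, List.countP_cons, ih]
    by_cases h : s ≤ x
    · rw [if_pos (by simpa using h)]
      omega
    · rw [if_neg (by simpa using h)]
      omega

end GNC

/-- Let `e` be a nilpotent `m×m` complex matrix of Jordan type the
partition `μ = (m₁ ≥ ⋯ ≥ m_k)` of `m` (i.e. `rank(e^s) = Σᵢ max(mᵢ − s, 0)` for all `s`).
Then for every `γ ∈ Mₘ(ℂ[[z]])` with constant term `e`, the coefficient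
`F_j(γ)` of `T^{m−j}` in the characteristic polynomial `det(T·Id − γ)` satisfies
`ν_z(F_j(γ)) ≥ n(μ,j)` for all `1 ≤ j ≤ m`. -/
theorem global_nilpotent_stmt4 (m : ℕ) (hm : 0 < m) (μ : List ℕ)
    (hpos : ∀ x ∈ μ, 0 < x) (hsorted : μ.Pairwise (· ≥ ·)) (hsum : μ.sum = m)
    (e : Matrix (Fin m) (Fin m) ℂ)
    (hJordan : ∀ s : ℕ, (e ^ s).rank = (μ.map (fun x => x - s)).sum)
    (γ : Matrix (Fin m) (Fin m) (PowerSeries ℂ))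
    (hγ : γ.map ((PowerSeries.constantCoeff (R := ℂ))) = e)
    (j : ℕ) (hj1 : 1 ≤ j) (hjm : j ≤ m) :
    (nIdx μ j : ℕ∞) ≤ (γ.charpoly.coeff (m - j)).order := by
  classical
  set n := nIdx μ j with hn
  -- basic facts about nIdx
  have hne : {a : ℕ | j ≤ (μ.take a).sum}.Nonempty :=
    ⟨μ.length, by simp only [Set.mem_setOf_eq, List.take_length, hsum]; exact hjm⟩
  have hnmem : j ≤ (μ.take n).sum := Nat.sInf_mem hne
  have hn1 : 1 ≤ n := by
    by_contra h
    have h0 : n = 0 := by omega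
    rw [h0] at hnmem
    simp only [List.take_zero, List.sum_nil] at hnmem
    omega
  have hlt : (μ.take (n - 1)).sum < j := by
    have hsInf : sInf {a : ℕ | j ≤ (μ.take a).sum} = n := rfl
    have h2 := Nat.notMem_of_lt_sInf (show n - 1 < sInf {a : ℕ | j ≤ (μ.take a).sum} by omega)
    simp only [Set.mem_setOf_eq, not_le] at h2
    exact h2
  -- the kernel flag
  set K : ℕ → Submodule ℂ (Fin m → ℂ) := fun s => LinearMap.ker (Matrix.mulVecLin (e ^ s))
    with hKdef
  have hKmono : Monotone K := by
    apply monotone_nat_of_le_succ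
    intro s x hx
    rw [hKdef, LinearMap.mem_ker] at hx ⊢
    have : e ^ (s+1) = e * e ^ s := (pow_succ' e s)
    rw [this, Matrix.mulVecLin_mul, LinearMap.comp_apply, hx, map_zero]
  have hKbot : K 0 = ⊥ := by
    rw [hKdef]
    simp only [pow_zero, Matrix.mulVecLin_one]
    exact LinearMap.ker_id
  set D : ℕ → ℕ := fun s => Module.finrank ℂ (K s) with hDdef
  have hD : ∀ s, D s + (e ^ s).rank = m := by
    intro s
    have h1 := LinearMap.finrank_range_add_finrank_ker (Matrix.mulVecLin (e ^ s))
    rw [Module.finrank_fin_fun] at h1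
    have h2 : (e ^ s).rank = Module.finrank ℂ (LinearMap.range (Matrix.mulVecLin (e ^ s))) := rfl
    have h3 : D s = Module.finrank ℂ (LinearMap.ker (Matrix.mulVecLin (e ^ s))) := rfl
    omega
  have hDmono : Monotone D := fun a b hab => Submodule.finrank_mono (hKmono hab)
  have hDm : D m = m := by
    have h0 : (e ^ m).rank = 0 := by
      rw [hJordan m]
      apply List.sum_eq_zero
      intro y hy
      obtain ⟨x, hx, rfl⟩ := List.mem_map.mp hy
      have hxle : x ≤ m := by
        have := List.single_le_sum (fun a _ => Nat.zero_le a) x hx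
        omega
      omega
    have := hD m
    omega
  have hKtop : K m = ⊤ := by
    apply Submodule.eq_top_of_finrank_eq
    rw [show Module.finrank ℂ (K m) = D m from rfl, hDm, Module.finrank_fin_fun]
  -- the adapted basis
  obtain ⟨v, hvind, hvspan⟩ := GNC.flag_basis K hKmono hKbot m
  set b0 : Fin m → (Fin m → ℂ) := fun p => v (Fin.cast hDm.symm p) with hb0def
  have himg : ∀ s, b0 '' {p : Fin m | (p : ℕ) < D s} = v '' {p | (p : ℕ) < D s} := by
    intro s
    ext y
    constructor
    · rintro ⟨q, hq, rfl⟩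
      exact ⟨Fin.cast hDm.symm q, hq, rfl⟩
    · rintro ⟨p, hp, rfl⟩
      exact ⟨Fin.cast hDm p, hp, rfl⟩
  have hspan' : ∀ s, s ≤ m → Submodule.span ℂ (b0 '' {p : Fin m | (p:ℕ) < D s}) = K s := by
    intro s hs
    rw [himg s]
    exact hvspan s hs
  have hb0 : LinearIndependent ℂ b0 :=
    hvind.comp _ (fun a b hab => Fin.cast_injective _ hab)
  have hb0span : ⊤ ≤ Submodule.span ℂ (Set.range b0) := by
    have huniv : {p : Fin m | (p:ℕ) < D m} = Set.univ := by
      ext p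
      simp only [Set.mem_setOf_eq, Set.mem_univ, iff_true, hDm]
      exact p.isLt
    rw [← Set.image_univ, ← huniv, hspan' m le_rfl, hKtop]
  set b : Module.Basis (Fin m) ℂ (Fin m → ℂ) := Module.Basis.mk hb0 hb0span with hbdef
  have hb : ⇑b = b0 := Module.Basis.coe_mk _ _
  -- levels
  set lvl : Fin m → ℕ := fun p => sInf {s | (p : ℕ) < D s} with hlvldef
  have hlvlne : ∀ p : Fin m, (p:ℕ) < D m := fun p => by rw [hDm]; exact p.isLt
  have hlvlmem : ∀ p : Fin m, (p : ℕ) < D (lvl p) := by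
    intro p
    have hne2 : {s : ℕ | (p:ℕ) < D s}.Nonempty := ⟨m, hlvlne p⟩
    exact Nat.sInf_mem hne2
  have hlvl_le_iff : ∀ (p : Fin m) (s : ℕ), lvl p ≤ s ↔ (p : ℕ) < D s := by
    intro p s
    constructor
    · intro h
      exact lt_of_lt_of_le (hlvlmem p) (hDmono h)
    · intro h
      exact Nat.sInf_le h
  have hD0 : D 0 = 0 := by
    have h1 : D 0 = Module.finrank ℂ (K 0) := rfl
    rw [h1, hKbot]
    exact finrank_bot ℂ _
  have hlvl1 : ∀ p : Fin m, 1 ≤ lvl p := by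
    intro p
    by_contra h
    have h2 : lvl p ≤ 0 := by omega
    rw [hlvl_le_iff] at h2
    omega
  have hlvlm : ∀ p : Fin m, lvl p ≤ m := fun p => (hlvl_le_iff p m).mpr (hlvlne p)
  -- the matrix of e in the adapted basis
  set f : (Fin m → ℂ) →ₗ[ℂ] (Fin m → ℂ) := Matrix.mulVecLin e with hfdef
  set e' : Matrix (Fin m) (Fin m) ℂ := LinearMap.toMatrix b b f with he'def
  have hentry : ∀ i l : Fin m, ¬ (lvl i < lvl l) → e' i l = 0 := by
    intro i l hil
    by_contra hne
    have hbl : b l ∈ K (lvl l) := by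
      rw [← hspan' (lvl l) (hlvlm l)]
      exact Submodule.subset_span ⟨l, hlvlmem l, by rw [← hb]⟩
    have hfl : f (b l) ∈ K (lvl l - 1) := by
      have h1 : (lvl l - 1) + 1 = lvl l := by
        have := hlvl1 l
        omega
      rw [hKdef, LinearMap.mem_ker] at hbl ⊢
      have h2 : e ^ (lvl l) = e ^ (lvl l - 1) * e := by rw [← pow_succ, h1]
      rw [hfdef]
      show Matrix.mulVecLin (e ^ (lvl l - 1)) (Matrix.mulVecLin e (b l)) = 0
      rw [← LinearMap.comp_apply, ← Matrix.mulVecLin_mul, ← h2, hbl]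
    rw [← hspan' (lvl l - 1) (by have := hlvlm l; omega), ← hb] at hfl
    have hsupp := (Module.Basis.mem_span_image b).mp hfl
    have hi_in : i ∈ (b.repr (f (b l))).support := by
      rw [Finsupp.mem_support_iff]
      rw [he'def, LinearMap.toMatrix_apply] at hne
      exact hne
    have hi2 : (i:ℕ) < D (lvl l - 1) := hsupp hi_in
    have hi3 := (hlvl_le_iff i (lvl l - 1)).mpr hi2
    have := hlvl1 l
    omega
  -- change of basis matrices
  set P : Matrix (Fin m) (Fin m) ℂ := (Pi.basisFun ℂ (Fin m)).toMatrix ⇑b with hPdef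
  set P' : Matrix (Fin m) (Fin m) ℂ := b.toMatrix ⇑(Pi.basisFun ℂ (Fin m)) with hP'def
  have hPP' : P * P' = 1 := Module.Basis.toMatrix_mul_toMatrix_flip _ _
  have hP'P : P' * P = 1 := Module.Basis.toMatrix_mul_toMatrix_flip _ _
  have hestd : LinearMap.toMatrix (Pi.basisFun ℂ (Fin m)) (Pi.basisFun ℂ (Fin m)) f = e := by
    rw [LinearMap.toMatrix_eq_toMatrix', hfdef, ← Matrix.toLin'_apply' e]
    exact LinearMap.toMatrix'_toLin' e
  have hconj : e * P = P * e' := by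
    have h1 : P * e' = LinearMap.toMatrix b (Pi.basisFun ℂ (Fin m)) f := by
      rw [hPdef, he'def]
      exact basis_toMatrix_mul_linearMap_toMatrix _ _ _ _
    have h2 : e * P = LinearMap.toMatrix b (Pi.basisFun ℂ (Fin m)) f := by
      rw [← hestd, hPdef]
      exact linearMap_toMatrix_mul_basis_toMatrix _ _ _ _
    rw [h1, h2]
  have hP'eP : P' * e * P = e' := by
    rw [mul_assoc, hconj, ← mul_assoc, hP'P, one_mul]
  -- move to power series
  set Q : Matrix (Fin m) (Fin m) (PowerSeries ℂ) := P.map (PowerSeries.C (R := ℂ)) with hQdef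
  set Q' : Matrix (Fin m) (Fin m) (PowerSeries ℂ) := P'.map (PowerSeries.C (R := ℂ)) with hQ'def
  have hmapCmul : ∀ (A B : Matrix (Fin m) (Fin m) ℂ),
      (A * B).map (PowerSeries.C (R := ℂ)) = A.map (PowerSeries.C (R := ℂ)) * B.map (PowerSeries.C (R := ℂ)) :=
    fun A B => Matrix.map_mul
  have hQQ' : Q * Q' = 1 := by
    rw [hQdef, hQ'def, ← hmapCmul, hPP']
    exact Matrix.map_one _ (map_zero _) (map_one _)
  have hQ'Q : Q' * Q = 1 := by
    rw [hQdef, hQ'def, ← hmapCmul, hP'P]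
    exact Matrix.map_one _ (map_zero _) (map_one _)
  have hch : (Q' * γ * Q).charpoly = γ.charpoly := GNC.charpoly_conj Q Q' γ hQQ' hQ'Q
  have hccC : ∀ (A : Matrix (Fin m) (Fin m) ℂ),
      (A.map (PowerSeries.C (R := ℂ))).map (PowerSeries.constantCoeff (R := ℂ)) = A := by
    intro A
    rw [Matrix.map_map]
    ext i k
    simp [Matrix.map_apply, PowerSeries.constantCoeff_C]
  have hconst : (Q' * γ * Q).map (PowerSeries.constantCoeff (R := ℂ)) = e' := by
    have hmm : ∀ (A B : Matrix (Fin m) (Fin m) (PowerSeries ℂ)),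
        (A * B).map (PowerSeries.constantCoeff (R := ℂ))
          = A.map (PowerSeries.constantCoeff (R := ℂ)) * B.map (PowerSeries.constantCoeff (R := ℂ)) :=
      fun A B => Matrix.map_mul
    rw [hmm, hmm, hQdef, hQ'def, hccC, hccC, hγ, hP'eP]
  -- apply the core estimate
  rw [← hch]
  apply GNC.core_estimate _ lvl n j hjm
  · intro i l hil
    have h1 : ((Q' * γ * Q).map (PowerSeries.constantCoeff (R := ℂ))) i l = e' i l := by rw [hconst]
    rw [Matrix.map_apply] at h1
    rw [h1]
    exact hentry i l hil
  · -- the combinatorial bound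
    intro S σ hScard hmoved
    by_contra hcon
    push_neg at hcon
    have hc_le : ∀ s, (S.filter (fun p => lvl p = s)).card ≤ n - 1 := by
      intro s
      have := GNC.perm_filter_card_le σ S hmoved lvl s
      omega
    have hfib : ∀ s, 1 ≤ s →
        (S.filter (fun p => lvl p = s)).card ≤ μ.countP (fun x => decide (s ≤ x)) := by
      intro s hs
      have hsub : (S.filter (fun p => lvl p = s)).card
          ≤ ((Finset.univ : Finset (Fin m)).filter (fun p => lvl p = s)).card :=
        Finset.card_le_card (Finset.filter_subset_filter _ (Finset.subset_univ S))
      have hDs : D s = D (s - 1) + μ.countP (fun x => decide (s ≤ x)) := by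
        have h1 := hD s
        have h2 := hD (s - 1)
        have h3 := GNC.map_sub_sum_eq μ s hs
        rw [hJordan s] at h1
        rw [hJordan (s-1)] at h2
        omega
      have hcard2 : ((Finset.univ : Finset (Fin m)).filter (fun p => lvl p = s)).card
          ≤ D s - D (s - 1) := by
        have hcr : (Finset.range (D s - D (s-1))).card = D s - D (s-1) := Finset.card_range _
        rw [← hcr]
        refine Finset.card_le_card_of_injOn (fun p => (p:ℕ) - D (s-1)) ?_ ?_
        · intro p hp
          rw [Finset.mem_coe, Finset.mem_filter] at hp
          have hp2 : (p:ℕ) < D s := by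
            rw [← hp.2]
            exact hlvlmem p
          have hp3 : ¬ ((p:ℕ) < D (s-1)) := by
            intro hcontra
            have := (hlvl_le_iff p (s-1)).mpr hcontra
            omega
          rw [Finset.mem_coe, Finset.mem_range]
          show (p:ℕ) - D (s-1) < D s - D (s-1)
          omega
        · intro p hp q hq hpq
          rw [Finset.coe_filter, Set.mem_setOf_eq] at hp hq
          have hp3 : ¬ ((p:ℕ) < D (s-1)) := by
            intro hcontra
            have := (hlvl_le_iff p (s-1)).mpr hcontra
            omega
          have hq3 : ¬ ((q:ℕ) < D (s-1)) := by
            intro hcontra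
            have := (hlvl_le_iff q (s-1)).mpr hcontra
            omega
          have hpq' : (p:ℕ) - D (s-1) = (q:ℕ) - D (s-1) := hpq
          have : (p:ℕ) = (q:ℕ) := by omega
          exact Fin.ext this
      omega
    have hcardsum : S.card = ∑ s ∈ Finset.Icc 1 m, (S.filter (fun p => lvl p = s)).card :=
      Finset.card_eq_sum_card_fiberwise
        (fun p _ => Finset.mem_Icc.mpr ⟨hlvl1 p, hlvlm p⟩)
    have hbound : ∀ s ∈ Finset.Icc 1 m, (S.filter (fun p => lvl p = s)).card
        ≤ min (μ.countP (fun x => decide (s ≤ x))) (n-1) := by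
      intro s hs
      exact le_min (hfib s (Finset.mem_Icc.mp hs).1) (hc_le s)
    have hsum2 : ∑ s ∈ Finset.Icc 1 m, min (μ.countP (fun x => decide (s ≤ x))) (n-1)
        ≤ (μ.take (n-1)).sum := by
      have := GNC.sum_min_countP_le hsorted (n-1)
      rwa [hsum] at this
    have hfin : S.card ≤ (μ.take (n-1)).sum := by
      rw [hcardsum]
      exact le_trans (Finset.sum_le_sum hbound) hsum2
    omega
end

section
/- Let μ = (m_1 ≥ m_2 ≥ ⋯ ≥ m_r) be a partition of m, and let γ ∈ M_m(ℂ[[z]]) be a block diagonal matrix with diagonal blocks γ_1, …, γ_r of sizes m_1, …, m_r such that the constant term γ_i(0) ∈ M_{m_i}(ℂ) is nilpotent for every i. Then ν_z(F_j(γ)) ≥ n(μ, j) for every 1 ≤ j ≤ m. -/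
open Finset Polynomial Matrix

section aux

variable {o : Type*} [Fintype o] [DecidableEq o] [LinearOrder o]
  {m' : o → ℕ} {R : Type*} [CommRing R]

/-- The equivalence between the fiber of `Sigma.fst` over `a` and `Fin (m' a)`. -/
def sigmaBlockEquiv (m' : o → ℕ) (a : o) :
    {x : Σ i, Fin (m' i) // x.1 = a} ≃ Fin (m' a) where
  toFun x := Fin.cast (congrArg m' x.2) x.1.2
  invFun k := ⟨⟨a, k⟩, rfl⟩
  left_inv := by rintro ⟨⟨i, b⟩, rfl⟩; rfl
  right_inv k := rfl

lemma charpoly_blockDiagonal'_aux (hpos : ∀ i, 0 < m' i)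
    (M : ∀ i, Matrix (Fin (m' i)) (Fin (m' i)) R) :
    (Matrix.blockDiagonal' M).charpoly = ∏ i, (M i).charpoly := by
  have hbt : (Matrix.blockDiagonal' M).BlockTriangular Sigma.fst := by
    rintro ⟨i, a⟩ ⟨i', a'⟩ h
    exact Matrix.blockDiagonal'_apply_ne M a a' (fun he => absurd he.symm (ne_of_lt h))
  rw [Matrix.BlockTriangular.charpoly (Matrix.blockDiagonal' M) hbt]
  refine Finset.prod_congr ?_ fun a _ => ?_
  · ext a
    simp only [Finset.mem_image, Finset.mem_univ, iff_true, true_and]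
    exact ⟨⟨a, ⟨0, hpos a⟩⟩, rfl⟩
  convert Matrix.charpoly_reindex (R := R) (sigmaBlockEquiv m' a).symm (M a) using 2
  ext x y
  obtain ⟨⟨i, b⟩, hx⟩ := x
  obtain ⟨⟨i', b'⟩, hy⟩ := y
  dsimp at hx hy
  subst hx; subst hy
  simp [Matrix.toSquareBlock_def, Matrix.blockDiagonal'_apply_eq, sigmaBlockEquiv,
    Matrix.reindex_apply, Matrix.submatrix_apply]

lemma le_order_sum {ι : Type*} (s : Finset ι) (f : ι → PowerSeries R) (n : ℕ∞)
    (h : ∀ i ∈ s, n ≤ (f i).order) : n ≤ (∑ i ∈ s, f i).order := by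
  refine PowerSeries.le_order _ _ fun d hd => ?_
  rw [map_sum]
  exact Finset.sum_eq_zero fun i hi =>
    PowerSeries.coeff_of_lt_order d (lt_of_lt_of_le hd (h i hi))

lemma le_order_prod {ι : Type*} (s : Finset ι) (f : ι → PowerSeries R) (n : ι → ℕ∞)
    (h : ∀ i ∈ s, n i ≤ (f i).order) : (∑ i ∈ s, n i) ≤ (∏ i ∈ s, f i).order := by
  classical
  induction s using Finset.induction with
  | empty => simp
  | @insert a s ha ih =>
    rw [Finset.prod_insert ha, Finset.sum_insert ha]
    exact le_trans
      (add_le_add (h _ (Finset.mem_insert_self a s))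
        (ih fun i hi => h i (Finset.mem_insert_of_mem hi)))
      (PowerSeries.le_order_mul _ _)

lemma take_sum_eq_s6 (l : List ℕ) : ∀ k, k ≤ l.length →
    (l.take k).sum = ∑ i ∈ Finset.range k, l.getD i 0 := by
  intro k hk
  induction k with
  | zero => simp
  | succ n ih =>
    have hn : n < l.length := hk
    rw [Finset.sum_range_succ, ← ih (le_of_lt hn), List.sum_take_succ _ n hn,
      List.getD_eq_getElem _ _ hn]

lemma strictMono_le_val {k n : ℕ} (f : Fin k → Fin n) (hf : StrictMono f) :
    ∀ t : Fin k, (t : ℕ) ≤ (f t : ℕ) := by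
  have key : ∀ v : ℕ, ∀ hv : v < k, v ≤ (f ⟨v, hv⟩ : ℕ) := by
    intro v
    induction v with
    | zero => intro hv; exact Nat.zero_le _
    | succ w ih =>
      intro hv
      have hw : w < k := by omega
      have h1 : (f ⟨w, hw⟩ : ℕ) < (f ⟨w + 1, hv⟩ : ℕ) :=
        Fin.lt_def.mp (hf (show (⟨w, hw⟩ : Fin k) < ⟨w + 1, hv⟩ from by simp [Fin.lt_def]))
      have h2 := ih hw
      omega
  intro t
  have h4 := key t.1 t.2
  simpa using h4

lemma sum_finset_le_sum_take (μ : List ℕ) (hs : μ.Pairwise (· ≥ ·))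
    (S : Finset (Fin μ.length)) :
    ∑ i ∈ S, μ.get i ≤ (μ.take S.card).sum := by
  have hkl : S.card ≤ μ.length := by
    simpa using Finset.card_le_card (Finset.subset_univ S)
  have e : Fin S.card ≃o {x // x ∈ S} := S.orderIsoOfFin rfl
  have h1 : ∑ i ∈ S, μ.get i = ∑ t : Fin S.card, μ.get (e t : Fin μ.length) := by
    rw [← Finset.sum_attach S (fun i => μ.get i)]
    exact (Fintype.sum_equiv e.toEquiv _ _ (fun t => rfl)).symm
  have h2 : ∀ t : Fin S.card, μ.get ((e t : Fin μ.length)) ≤ μ.get (Fin.castLE hkl t) := by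
    intro t
    have hmono : StrictMono (fun t : Fin S.card => ((e t : Fin μ.length))) := by
      intro a b hab
      exact e.strictMono hab
    have hle : (t : ℕ) ≤ ((e t : Fin μ.length) : ℕ) := strictMono_le_val _ hmono t
    exact hs.rel_get_of_le (by exact hle)
  have h3 : ∑ t : Fin S.card, μ.get (Fin.castLE hkl t) = (μ.take S.card).sum := by
    rw [take_sum_eq_s6 μ S.card hkl, ← Fin.sum_univ_eq_sum_range (fun i => μ.getD i 0) S.card]
    refine Finset.sum_congr rfl fun t _ => ?_
    rw [List.getD_eq_getElem _ _ (lt_of_lt_of_le t.2 hkl)]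
    rfl
  rw [h1, ← h3]
  exact Finset.sum_le_sum fun t _ => h2 t

end aux

/-- Let `μ = (m₁ ≥ ⋯ ≥ m_r)` be a partition of `m = Σ mᵢ` and let `γ` be
the block diagonal matrix over `ℂ[[z]]` with diagonal blocks `γ₁, …, γ_r` of sizes
`m₁, …, m_r`, such that each constant term `γᵢ(0) ∈ M_{mᵢ}(ℂ)` is nilpotent. Then the
coefficient `F_j(γ)` of `T^{m−j}` in `det(T·Id − γ)` satisfies `ν_z(F_j(γ)) ≥ n(μ,j)`
for all `1 ≤ j ≤ m`. -/
theorem global_nilpotent_stmt6 (μ : List ℕ)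
    (hpos : ∀ x ∈ μ, 0 < x) (hsorted : μ.Pairwise (· ≥ ·))
    (γb : ∀ i : Fin μ.length, Matrix (Fin (μ.get i)) (Fin (μ.get i)) (PowerSeries ℂ))
    (hnil : ∀ i : Fin μ.length, IsNilpotent ((γb i).map (PowerSeries.constantCoeff (R := ℂ))))
    (j : ℕ) (hj1 : 1 ≤ j) (hjm : j ≤ μ.sum) :
    (nIdx μ j : ℕ∞) ≤ ((Matrix.blockDiagonal' γb).charpoly.coeff (μ.sum - j)).order := by
  classical
  set m : Fin μ.length → ℕ := fun i => μ.get i with hm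
  set p : Fin μ.length → Polynomial (PowerSeries ℂ) := fun i => (γb i).charpoly with hp
  have hdeg : ∀ i, (p i).natDegree = m i := by
    intro i
    show ((γb i).charpoly).natDegree = μ.get i
    simp
  -- constant coefficients vanish below the degree
  have hconst : ∀ i, ∀ k < m i, PowerSeries.constantCoeff (R := ℂ) ((p i).coeff k) = 0 := by
    intro i k hk
    have hX : ((γb i).map (PowerSeries.constantCoeff (R := ℂ))).charpoly = X ^ (m i) := by
      have h2 := Matrix.isNilpotent_charpoly_sub_pow_of_isNilpotent (hnil i)
      have h3 := h2.eq_zero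
      rw [sub_eq_zero] at h3
      simpa [hm] using h3
    have h4 : (p i).map (PowerSeries.constantCoeff (R := ℂ)) = X ^ (m i) := by
      show ((γb i).charpoly).map (PowerSeries.constantCoeff (R := ℂ)) = X ^ (m i)
      rw [← Matrix.charpoly_map, hX]
    have h5 := congrArg (fun q => Polynomial.coeff q k) h4
    simpa [Polynomial.coeff_X_pow, Nat.ne_of_lt hk] using h5
  have horder1 : ∀ i, ∀ k < m i, (1 : ℕ∞) ≤ ((p i).coeff k).order := by
    intro i k hk
    refine PowerSeries.nat_le_order _ 1 fun d hd => ?_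
    interval_cases d
    simpa using hconst i k hk
  -- charpoly of the block diagonal matrix
  have hcp : (Matrix.blockDiagonal' γb).charpoly = ∏ i, p i :=
    charpoly_blockDiagonal'_aux (o := Fin μ.length) (m' := fun i => μ.get i)
      (fun i => hpos _ (μ.get_mem i)) γb
  -- the total sum
  have hsum : ∑ i, m i = μ.sum := by
    show ∑ i : Fin μ.length, μ.get i = μ.sum
    simp
  -- coefficient of the product as a sum over finsuppAntidiag
  have hco : (∏ i, p i).coeff (μ.sum - j) =
      ∑ σ ∈ Finset.finsuppAntidiag Finset.univ (μ.sum - j), ∏ i, (p i).coeff (σ i) := by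
    have h6 : ((∏ i, p i : Polynomial (PowerSeries ℂ)) : PowerSeries (PowerSeries ℂ)) =
        ∏ i, ((p i : Polynomial (PowerSeries ℂ)) : PowerSeries (PowerSeries ℂ)) := by
      simp only [← Polynomial.coeToPowerSeries.ringHom_apply]
      exact map_prod _ _ _
    have h7 := PowerSeries.coeff_prod
      (fun i => ((p i : Polynomial (PowerSeries ℂ)) : PowerSeries (PowerSeries ℂ)))
      (μ.sum - j) Finset.univ
    rw [← h6] at h7
    simpa [Polynomial.coeff_coe] using h7
  rw [hcp, hco]
  refine le_order_sum _ _ _ fun σ hσ => ?_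
  obtain ⟨hσsum, -⟩ := (Finset.mem_finsuppAntidiag).mp hσ
  by_cases hA : ∃ i, m i < σ i
  · obtain ⟨i, hi⟩ := hA
    have h0 : (p i).coeff (σ i) = 0 :=
      Polynomial.coeff_eq_zero_of_natDegree_lt (by rw [hdeg i]; exact hi)
    rw [Finset.prod_eq_zero (Finset.mem_univ i) h0, PowerSeries.order_zero]
    exact le_top
  · push_neg at hA
    -- order bound
    have hord : (((Finset.univ.filter (fun i => σ i < m i)).card : ℕ∞)) ≤
        ((∏ i, (p i).coeff (σ i)).order) := by
      have h8 : ∑ i, (if σ i < m i then (1 : ℕ∞) else 0)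
          = (((Finset.univ.filter (fun i => σ i < m i)).card : ℕ∞)) := by
        rw [Finset.sum_ite, Finset.sum_const, Finset.sum_const_zero, add_zero, nsmul_eq_mul,
          mul_one]
      rw [← h8]
      refine le_order_prod _ _ _ fun i _ => ?_
      by_cases hcase : σ i < m i
      · simpa [hcase] using horder1 i (σ i) hcase
      · simp [hcase]
    -- cardinality bound
    have hjS : j ≤ ∑ i ∈ Finset.univ.filter (fun i => σ i < m i), m i := by
      have hCA : ∑ i ∈ Finset.univ.filter (fun i => σ i < m i), σ i
          ≤ ∑ i ∈ Finset.univ.filter (fun i => σ i < m i), m i :=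
        Finset.sum_le_sum fun i hi => le_of_lt (Finset.mem_filter.mp hi).2
      have heqc : ∑ i ∈ Finset.univ.filter (fun i => ¬ σ i < m i), σ i
          = ∑ i ∈ Finset.univ.filter (fun i => ¬ σ i < m i), m i := by
        refine Finset.sum_congr rfl fun i hi => ?_
        have h9 := (Finset.mem_filter.mp hi).2
        have h10 := hA i
        omega
      have hsplitm := Finset.sum_filter_add_sum_filter_not Finset.univ
        (fun i => σ i < m i) m
      have hsplitσ := Finset.sum_filter_add_sum_filter_not Finset.univ
        (fun i => σ i < m i) (fun i => σ i)
      rw [heqc] at hsplitσ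
      rw [hsum] at hsplitm
      rw [hσsum] at hsplitσ
      omega
    have hnle : nIdx μ j ≤ (Finset.univ.filter (fun i => σ i < m i)).card :=
      Nat.sInf_le (le_trans hjS (sum_finset_le_sum_take μ hsorted _))
    exact le_trans (by exact_mod_cast hnle) hord
end

section
/- Let e ∈ M_m(ℂ) be any nilpotent matrix and let M ∈ M_m(ℂ[[z]]) have vanishing constant term, M(0) = 0. Set γ = z^{−1}(e + M) ∈ M_m(ℂ((z))). Then for every 1 ≤ j ≤ m, ν_z(F_j(γ)) ≥ −(j − 1). -/
open Polynomial

/-- Coefficients of `p(vX)`. -/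
private lemma coeff_eval₂_Cmul {R : Type*} [CommRing R] (v : R) (p : R[X]) (k : ℕ) :
    (p.eval₂ Polynomial.C (Polynomial.C v * Polynomial.X)).coeff k = v ^ k * p.coeff k := by
  induction p using Polynomial.induction_on' with
  | add p q hp hq => simp [hp, hq, mul_add]
  | monomial n a =>
    rw [eval₂_monomial]
    have hmono : Polynomial.C a * (Polynomial.C v * Polynomial.X) ^ n =
        Polynomial.monomial n (a * v ^ n) := by
      rw [mul_pow, ← Polynomial.C_pow, ← mul_assoc, ← Polynomial.C_mul,
        Polynomial.C_mul_X_pow_eq_monomial]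
    rw [hmono, coeff_monomial, coeff_monomial]
    split_ifs with h1
    · subst h1; ring
    · ring

/-- Characteristic polynomial coefficients of a unit scalar multiple of a matrix. -/
private lemma charpoly_unit_smul_coeff {n : Type*} [DecidableEq n] [Fintype n]
    {R : Type*} [CommRing R] (c : Rˣ) (A : Matrix n n R) (k : ℕ)
    (hk : k ≤ Fintype.card n) :
    ((c : R) • A).charpoly.coeff k =
      (c : R) ^ (Fintype.card n - k) * A.charpoly.coeff k := by
  set v : R := ((c⁻¹ : Rˣ) : R) with hv
  let f : R[X] →+* R[X] := Polynomial.eval₂RingHom Polynomial.C (Polynomial.C v * Polynomial.X)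
  have hmat : Matrix.charmatrix ((c : R) • A) =
      (Polynomial.C (c : R)) • ((Matrix.charmatrix A).map f) := by
    ext i j : 2
    by_cases h : i = j
    · subst h
      have hf : f (Polynomial.X - Polynomial.C (A i i)) =
          Polynomial.C v * Polynomial.X - Polynomial.C (A i i) := by simp [f]
      rw [Matrix.smul_apply, Matrix.map_apply, Matrix.charmatrix_apply_eq,
        Matrix.charmatrix_apply_eq, hf, Matrix.smul_apply, smul_eq_mul, smul_eq_mul]
      rw [mul_sub, ← mul_assoc, ← Polynomial.C_mul, hv, Units.mul_inv, Polynomial.C_1, one_mul,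
        ← Polynomial.C_mul]
    · have hf : f (-Polynomial.C (A i j)) = -Polynomial.C (A i j) := by simp [f]
      rw [Matrix.smul_apply, Matrix.map_apply, Matrix.charmatrix_apply_ne _ _ _ h,
        Matrix.charmatrix_apply_ne _ _ _ h, hf, Matrix.smul_apply, smul_eq_mul, smul_eq_mul,
        mul_neg, ← Polynomial.C_mul]
  have hcp : ((c : R) • A).charpoly =
      (Polynomial.C (c : R)) ^ (Fintype.card n) * f A.charpoly := by
    rw [Matrix.charpoly, hmat, Matrix.det_smul, Matrix.charpoly, RingHom.map_det]
    rfl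
  have key : ((c : R) • A).charpoly.coeff k = (c : R) ^ Fintype.card n * (v ^ k *
      A.charpoly.coeff k) := by
    rw [hcp, ← Polynomial.C_pow, coeff_C_mul]
    congr 1
    exact coeff_eval₂_Cmul v A.charpoly k
  rw [key]
  have hpow : (c : R) ^ Fintype.card n = (c : R) ^ (Fintype.card n - k) * (c : R) ^ k := by
    rw [← pow_add, Nat.sub_add_cancel hk]
  rw [hpow]
  have : (c : R) ^ k * v ^ k = 1 := by
    rw [hv, ← mul_pow, Units.mul_inv, one_pow]
  rw [mul_assoc, ← mul_assoc ((c:R)^k), this, one_mul]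

private lemma ofPowerSeries_coeff_neg (x : PowerSeries ℂ) (a : ℤ) (ha : a < 0) :
    (HahnSeries.ofPowerSeries ℤ ℂ x).coeff a = 0 := by
  rw [HahnSeries.ofPowerSeries_apply]
  apply HahnSeries.embDomain_notin_range
  rintro ⟨n, hn⟩
  have hn' : (n : ℤ) = a := hn
  omega

/-- Let `e ∈ Mₘ(ℂ)` be nilpotent and `M ∈ Mₘ(ℂ[[z]])` with vanishing
constant term. Set `γ = z⁻¹(e + M) ∈ Mₘ(ℂ((z)))`. Then for every `1 ≤ j ≤ m`, the
coefficient `F_j(γ)` of `T^{m−j}` in `det(T·Id − γ)` satisfies `ν_z(F_j(γ)) ≥ −(j−1)`,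
i.e. all Laurent coefficients of `F_j(γ)` in degrees `< −(j−1)` vanish. -/
theorem global_nilpotent_stmt9 (m : ℕ) (hm : 0 < m)
    (e : Matrix (Fin m) (Fin m) ℂ) (he : IsNilpotent e)
    (M : Matrix (Fin m) (Fin m) (PowerSeries ℂ))
    (hM : M.map (PowerSeries.constantCoeff (R := ℂ)) = 0)
    (j : ℕ) (hj1 : 1 ≤ j) (hjm : j ≤ m) :
    ∀ i : ℤ, i < -((j : ℤ) - 1) →
      (((Matrix.of fun a b => ((HahnSeries.single (-1 : ℤ) (1 : ℂ)) *
          HahnSeries.ofPowerSeries ℤ ℂ (PowerSeries.C (R := ℂ) (e a b) + M a b) :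
            LaurentSeries ℂ))).charpoly.coeff (m - j)).coeff i = 0 := by
  intro i hi
  set u : LaurentSeries ℂ := HahnSeries.single (-1 : ℤ) (1 : ℂ) with hu_def
  set φ : PowerSeries ℂ →+* LaurentSeries ℂ := HahnSeries.ofPowerSeries ℤ ℂ with hφ
  set N : Matrix (Fin m) (Fin m) (PowerSeries ℂ) :=
    Matrix.of fun a b => PowerSeries.C (R := ℂ) (e a b) + M a b with hN
  -- u is a unit
  have hu1 : u * HahnSeries.single (1 : ℤ) (1 : ℂ) = 1 := by
    rw [hu_def, HahnSeries.single_mul_single]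
    norm_num
  have hu : IsUnit u := IsUnit.of_mul_eq_one _ hu1
  -- rewrite the matrix as u • (N.map φ)
  have hmat : (Matrix.of fun a b => ((HahnSeries.single (-1 : ℤ) (1 : ℂ)) *
      HahnSeries.ofPowerSeries ℤ ℂ (PowerSeries.C (R := ℂ) (e a b) + M a b) :
        LaurentSeries ℂ)) = u • (N.map φ) := by
    rfl
  rw [hmat]
  have hcard : Fintype.card (Fin m) = m := Fintype.card_fin m
  have hk : m - j ≤ Fintype.card (Fin m) := by omega
  have hsmul := charpoly_unit_smul_coeff hu.unit (N.map φ) (m - j) hk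
  rw [IsUnit.unit_spec] at hsmul
  rw [hsmul]
  have hexp : Fintype.card (Fin m) - (m - j) = j := by omega
  rw [hexp]
  -- charpoly of mapped matrix
  have hcm : (N.map φ).charpoly = N.charpoly.map φ := Matrix.charpoly_map N φ
  rw [hcm, Polynomial.coeff_map]
  set F : PowerSeries ℂ := N.charpoly.coeff (m - j) with hF
  -- u ^ j = single (-j) 1
  have hupow : u ^ j = HahnSeries.single (-(j : ℤ)) (1 : ℂ) := by
    rw [hu_def, HahnSeries.single_pow, one_pow]
    congr 1
    simp
  rw [hupow]
  -- coefficient extraction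
  have hi' : i = (i + (j : ℤ)) + (-(j : ℤ)) := by ring
  rw [hi', HahnSeries.coeff_single_mul_add, one_mul]
  rcases lt_or_eq_of_le (show i + (j : ℤ) ≤ 0 by omega) with h | h
  · exact ofPowerSeries_coeff_neg F _ h
  · rw [h]
    have h0 : ((0 : ℕ) : ℤ) = (0 : ℤ) := by norm_num
    rw [← h0, HahnSeries.ofPowerSeries_apply_coeff]
    -- constant coefficient of F is the (m-j) coeff of charpoly of e
    set ψ : PowerSeries ℂ →+* ℂ := PowerSeries.constantCoeff (R := ℂ) with hψ
    have hcoeff0 : (PowerSeries.coeff (R := ℂ) 0) F = ψ F := by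
      rw [hψ, PowerSeries.coeff_zero_eq_constantCoeff]
    rw [hcoeff0, hF, ← Polynomial.coeff_map, ← Matrix.charpoly_map N ψ]
    have hNe : N.map ψ = e := by
      ext a b
      have : (M.map (PowerSeries.constantCoeff (R := ℂ))) a b = 0 := by rw [hM]; rfl
      simp only [Matrix.map_apply] at this ⊢
      simp [hN, hψ, this]
    rw [hNe]
    -- charpoly of nilpotent matrix over ℂ is X^m
    have hnil := Matrix.isNilpotent_charpoly_sub_pow_of_isNilpotent he
    have hcp : e.charpoly = Polynomial.X ^ (Fintype.card (Fin m)) := by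
      have := hnil.eq_zero
      linear_combination this
    rw [hcp, Polynomial.coeff_X_pow]
    rw [if_neg (by omega)]
end
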